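/- Let E₁ ⊇ E₂ ⊇ ⋯ be a decreasing sequence of subsets of ℝ, each a finite union of disjoint closed intervals, such that each interval of E_{n-1} contains at least m_n ≥ 2 intervals of E_n separated by gaps of at least γ_n, where (γ_n) is a strictly decreasing positive sequence. Then the Hausdorff dimension of E = ⋂_n E_n is at least liminf_{n→∞} (log(m₁ ⋯ m_{n-1}) / (-log(m_n γ_n))). -/

import Mathlib

set_option maxHeartbeats 1000000

open Filter MeasureTheory
open scoped Classical ENNReal NNReal

section Aux

/-- Packing lemma: a finite set of `γ`-separated points within distance `d` of `x₀`
has at most `2d/γ + 2` elements. -/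
lemma aux_packing (P : Finset ℝ) (γ d x₀ : ℝ) (hγ : 0 < γ) (hd : 0 ≤ d)
    (hP : ∀ x ∈ P, |x - x₀| ≤ d)
    (hsep : ∀ x ∈ P, ∀ y ∈ P, x ≠ y → γ ≤ |x - y|) :
    (P.card : ℝ) ≤ 2 * d / γ + 2 := by
  have hB : 0 ≤ 2 * d / γ + 2 := by positivity
  set a : ℤ := ⌊(x₀ - d) / γ⌋ with ha
  set b : ℤ := ⌊(x₀ + d) / γ⌋ with hb
  have hcard : P.card ≤ (Finset.Icc a b).card := by
    apply Finset.card_le_card_of_injOn (fun x => ⌊x / γ⌋)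
    · intro x hx
      have h1 : |x - x₀| ≤ d := hP x hx
      have h2 : x₀ - d ≤ x := by cases abs_le.mp h1; linarith
      have h3 : x ≤ x₀ + d := by cases abs_le.mp h1; linarith
      simp only [Finset.coe_Icc, Set.mem_Icc]
      constructor
      · exact Int.floor_le_floor (by gcongr)
      · exact Int.floor_le_floor (by gcongr)
    · intro x hx y hy hxy
      by_contra hne
      have hsep' := hsep x hx y hy hne
      have h1 : |x / γ - y / γ| < 1 := Int.abs_sub_lt_one_of_floor_eq_floor hxy
      rw [div_sub_div_same, abs_div, abs_of_pos hγ, div_lt_one hγ] at h1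
      linarith
  have h2 : ((Finset.Icc a b).card : ℝ) ≤ 2 * d / γ + 2 := by
    rw [Int.card_Icc]
    rcases le_or_gt (b + 1 - a) 0 with h | h
    · rw [Int.toNat_of_nonpos h]; simpa using hB
    · have : ((b + 1 - a).toNat : ℝ) = ((b : ℝ) + 1 - a) := by
        rw [← Int.cast_natCast, Int.toNat_of_nonneg h.le]; push_cast; ring
      rw [this]
      have hbu : (b : ℝ) ≤ (x₀ + d) / γ := Int.floor_le _
      have hal : (x₀ - d) / γ - 1 < (a : ℝ) := Int.sub_one_lt_floor _
      have : (x₀ + d) / γ - ((x₀ - d) / γ) = 2 * d / γ := by field_simp; ring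
      linarith
  exact le_trans (by exact_mod_cast hcard) h2

variable (m : ℕ → ℕ) (γ : ℕ → ℝ) (S : ℕ → Finset (Set ℝ))

/-- distinct members of `S n` meeting are equal -/
lemma aux_uniq (hγpos : ∀ n, 0 < γ n)
    (hSgap : ∀ n, ∀ I ∈ S n, ∀ J ∈ S n, I ≠ J → ∀ x ∈ I, ∀ y ∈ J, γ n ≤ |x - y|)
    {n : ℕ} {I J : Set ℝ} (hI : I ∈ S n) (hJ : J ∈ S n)
    (h : (I ∩ J).Nonempty) : I = J := by
  by_contra hne
  obtain ⟨x, hxI, hxJ⟩ := h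
  have h0 : γ n ≤ 0 := by simpa using hSgap n I hI J hJ hne x hxI x hxJ
  exact absurd h0 (not_le.mpr (hγpos n))

/-- each member of `S M` is contained in some member of `S k` for `k ≤ M` -/
lemma aux_ancestor (hSnest : ∀ n, ∀ J ∈ S (n+1), ∃ I ∈ S n, J ⊆ I) :
    ∀ M, ∀ K ∈ S M, ∀ k, k ≤ M → ∃ I ∈ S k, K ⊆ I := by
  intro M
  induction M with
  | zero => intro K hK k hk; exact ⟨K, by simpa [Nat.le_zero.mp hk] using hK, subset_rfl⟩
  | succ M ih =>
    intro K hK k hk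
    rcases Nat.eq_or_lt_of_le hk with h | h
    · exact ⟨K, h ▸ hK, subset_rfl⟩
    · obtain ⟨J, hJ, hKJ⟩ := hSnest M K hK
      obtain ⟨I, hI, hJI⟩ := ih J hJ k (Nat.lt_succ_iff.mp h)
      exact ⟨I, hI, hKJ.trans hJI⟩

/-- number of descendants at level `M` of a member of `S k`. -/
lemma aux_descend (hγpos : ∀ n, 0 < γ n)
    (hSIcc : ∀ n, ∀ I ∈ S n, ∃ a b : ℝ, a ≤ b ∧ I = Set.Icc a b)
    (hSnest : ∀ n, ∀ J ∈ S (n+1), ∃ I ∈ S n, J ⊆ I)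
    (hSgap : ∀ n, ∀ I ∈ S n, ∀ J ∈ S n, I ≠ J → ∀ x ∈ I, ∀ y ∈ J, γ n ≤ |x - y|)
    (hScard : ∀ n, ∀ I ∈ S n, ((S (n+1)).filter (fun J => J ⊆ I)).card = m (n+1)) :
    ∀ M k, k ≤ M → ∀ I ∈ S k,
      (((S M).filter (fun K => K ⊆ I)).card : ℕ) = ∏ i ∈ Finset.Ioc k M, m i := by
  have hNE : ∀ n, ∀ I ∈ S n, I.Nonempty := by
    intro n I hI
    obtain ⟨a, b, hab, rfl⟩ := hSIcc n I hI
    exact Set.nonempty_Icc.mpr hab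
  have hbase : ∀ k, ∀ I ∈ S k, (S k).filter (fun K => K ⊆ I) = {I} := by
    intro k I hI
    ext K
    simp only [Finset.mem_filter, Finset.mem_singleton]
    constructor
    · rintro ⟨hK, hKI⟩
      obtain ⟨x, hx⟩ := hNE k K hK
      exact aux_uniq γ S hγpos hSgap hK hI ⟨x, hx, hKI hx⟩
    · rintro rfl; exact ⟨hI, subset_rfl⟩
  intro M
  induction M with
  | zero =>
    intro k hk I hI
    interval_cases k
    rw [hbase 0 I hI]
    simp
  | succ M ih =>
    intro k hk I hI
    rcases Nat.eq_or_lt_of_le hk with h | h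
    · subst h
      rw [hbase _ I hI]
      simp
    · have hkM : k ≤ M := Nat.lt_succ_iff.mp h
      have hset : (S (M+1)).filter (fun K => K ⊆ I) =
          ((S M).filter (fun K => K ⊆ I)).biUnion (fun K => (S (M+1)).filter (fun J => J ⊆ K)) := by
        ext J
        simp only [Finset.mem_filter, Finset.mem_biUnion]
        constructor
        · rintro ⟨hJ, hJI⟩
          obtain ⟨K, hK, hJK⟩ := hSnest M J hJ
          obtain ⟨I', hI', hKI'⟩ := aux_ancestor S hSnest M K hK k hkM
          obtain ⟨x, hx⟩ := hNE _ J hJ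
          have : I = I' := aux_uniq γ S hγpos hSgap hI hI' ⟨x, hJI hx, hKI' (hJK hx)⟩
          exact ⟨K, ⟨hK, this ▸ hKI'⟩, hJ, hJK⟩
        · rintro ⟨K, ⟨hK, hKI⟩, hJ, hJK⟩
          exact ⟨hJ, hJK.trans hKI⟩
      rw [hset, Finset.card_biUnion]
      · have : ∀ K ∈ (S M).filter (fun K => K ⊆ I),
            ((S (M+1)).filter (fun J => J ⊆ K)).card = m (M+1) := by
          intro K hK
          exact hScard M K (Finset.mem_filter.mp hK).1
        rw [Finset.sum_congr rfl this, Finset.sum_const, smul_eq_mul,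
          ih k hkM I hI, Finset.prod_Ioc_succ_top hkM]
      · intro K hK K' hK' hne
        rw [Function.onFun, Finset.disjoint_left]
        intro J hJ hJ'
        obtain ⟨x, hx⟩ := hNE _ J (Finset.mem_filter.mp hJ).1
        exact hne (aux_uniq γ S hγpos hSgap (Finset.mem_filter.mp hK).1
          (Finset.mem_filter.mp hK').1
          ⟨x, (Finset.mem_filter.mp hJ).2 hx, (Finset.mem_filter.mp hJ').2 hx⟩)

end Aux

section Main

/-- The core lower bound, given a selected nested family `S`. -/
lemma cantor_lower (m : ℕ → ℕ) (γ : ℕ → ℝ) (S : ℕ → Finset (Set ℝ)) (I₀ : Set ℝ) (a₀ b₀ : ℝ)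
    (hm : ∀ n, 2 ≤ m n)
    (hγpos : ∀ n, 0 < γ n)
    (hγanti : ∀ {j k}, j ≤ k → γ k ≤ γ j)
    (hS0 : S 0 = {I₀}) (hI₀ : I₀ = Set.Icc a₀ b₀) (hab : a₀ ≤ b₀)
    (hSIcc : ∀ n, ∀ I ∈ S n, ∃ a b : ℝ, a ≤ b ∧ I = Set.Icc a b)
    (hSnest : ∀ n, ∀ J ∈ S (n+1), ∃ I ∈ S n, J ⊆ I)
    (hSgap : ∀ n, ∀ I ∈ S n, ∀ J ∈ S n, I ≠ J → ∀ x ∈ I, ∀ y ∈ J, γ n ≤ |x - y|)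
    (hScard : ∀ n, ∀ I ∈ S n, ((S (n+1)).filter (fun J => J ⊆ I)).card = m (n+1))
    (s : ℝ) (hs0 : 0 < s) (hs1 : s ≤ 1) (N₀ : ℕ)
    (hkey : ∀ k, N₀ ≤ k → 1 ≤ (∏ i ∈ Finset.Ioc 0 k, (m i : ℝ)) * ((m (k+1) : ℝ) * γ (k+1)) ^ s) :
    ENNReal.ofReal s ≤ dimH (⋂ n, ⋃₀ (S n : Set (Set ℝ))) := by
  classical
  set E := ⋂ n, ⋃₀ (S n : Set (Set ℝ)) with hE
  have hNE : ∀ n, ∀ I ∈ S n, I.Nonempty := by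
    intro n I hI
    obtain ⟨a, b, hab', rfl⟩ := hSIcc n I hI
    exact Set.nonempty_Icc.mpr hab'
  have hsub0 : ∀ n, ∀ K ∈ S n, K ⊆ I₀ := by
    intro n K hK
    obtain ⟨I, hI, hKI⟩ := aux_ancestor S hSnest n K hK 0 (Nat.zero_le n)
    rw [hS0, Finset.mem_singleton] at hI
    exact hI ▸ hKI
  have hEsub : E ⊆ I₀ := by
    intro x hx
    have : x ∈ ⋃₀ (S 0 : Set (Set ℝ)) := Set.mem_iInter.mp hx 0
    obtain ⟨K, hK, hxK⟩ := this
    exact hsub0 0 K hK hxK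
  have hclosed : ∀ n, IsClosed (⋃₀ (S n : Set (Set ℝ))) := by
    intro n
    rw [Set.sUnion_eq_biUnion]
    apply Set.Finite.isClosed_biUnion (S n).finite_toSet
    intro I hI
    obtain ⟨a, b, _, rfl⟩ := hSIcc n I hI
    exact isClosed_Icc
  have hEclosed : IsClosed E := isClosed_iInter hclosed
  have hEcomp : IsCompact E := by
    rw [hI₀] at hEsub
    exact IsCompact.of_isClosed_subset isCompact_Icc hEclosed hEsub
  -- every deep interval meets E
  have hchild : ∀ n (K : Set ℝ), ∃ J, K ∈ S n → J ∈ S (n+1) ∧ J ⊆ K := by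
    intro n K
    by_cases hK : K ∈ S n
    · have hc : 0 < ((S (n+1)).filter (fun J => J ⊆ K)).card := by
        rw [hScard n K hK]
        have := hm (n+1)
        omega
      obtain ⟨J, hJ⟩ := Finset.card_pos.mp hc
      exact ⟨J, fun _ => ⟨(Finset.mem_filter.mp hJ).1, (Finset.mem_filter.mp hJ).2⟩⟩
    · exact ⟨∅, fun h => absurd h hK⟩
  choose f hf using hchild
  have hKE : ∀ M, ∀ K ∈ S M, (K ∩ E).Nonempty := by
    intro M K hK
    set L : ℕ → Set ℝ := fun j => Nat.rec K (fun j Kj => f (M + j) Kj) j with hL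
    have hLmem : ∀ j, L j ∈ S (M + j) := by
      intro j
      induction j with
      | zero => exact hK
      | succ j ih => exact (hf (M + j) (L j) ih).1
    have hLsub : ∀ j, L (j + 1) ⊆ L j := fun j => (hf (M + j) (L j) (hLmem j)).2
    have hLne : ∀ j, (L j).Nonempty := fun j => hNE _ _ (hLmem j)
    have hLIcc : ∀ j, ∃ a b : ℝ, a ≤ b ∧ L j = Set.Icc a b := fun j => hSIcc _ _ (hLmem j)
    have hLclosed : ∀ j, IsClosed (L j) := by
      intro j; obtain ⟨a, b, _, h⟩ := hLIcc j; rw [h]; exact isClosed_Icc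
    have hLcomp : IsCompact (L 0) := by
      obtain ⟨a, b, _, h⟩ := hLIcc 0; rw [h]; exact isCompact_Icc
    obtain ⟨x, hx⟩ := IsCompact.nonempty_iInter_of_sequence_nonempty_isCompact_isClosed
      L hLsub hLne hLcomp hLclosed
    refine ⟨x, Set.mem_iInter.mp hx 0, ?_⟩
    rw [hE]
    apply Set.mem_iInter.mpr
    intro n
    rcases le_or_gt M n with h | h
    · have : L (n - M) ∈ S n := by
        have := hLmem (n - M)
        rwa [Nat.add_sub_cancel' h] at this
      exact ⟨L (n - M), this, Set.mem_iInter.mp hx (n - M)⟩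
    · obtain ⟨I, hI, hKI⟩ := aux_ancestor S hSnest M K hK n h.le
      exact ⟨I, hI, hKI (Set.mem_iInter.mp hx 0)⟩
  -- the Hausdorff measure bound
  have hI0S : I₀ ∈ S 0 := by rw [hS0]; exact Finset.mem_singleton_self I₀
  have hmain : ENNReal.ofReal (1/8) ≤ μH[s] E := by
    set N₁ : ℕ := N₀ + 1 with hN₁
    set γ₁ : ℝ := γ (N₁ + 1) with hγ₁def
    have hγ₁pos : 0 < γ₁ := hγpos _
    rw [MeasureTheory.Measure.hausdorffMeasure_apply]
    refine le_iSup_of_le (ENNReal.ofReal (γ₁ / 2)) ?_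
    refine le_iSup_of_le (ENNReal.ofReal_pos.mpr (by positivity)) ?_
    refine le_iInf fun t => le_iInf fun hcov => le_iInf fun hdiam => ?_
    -- Step 1: thicken the cover to an open cover
    set ε : ℕ → ℝ := fun n => min (γ₁ / 8) (((1/32 : ℝ) * (1/2)^n) ^ (1/s) / 2) with hεdef
    have hεpos : ∀ n, 0 < ε n := fun n => lt_min (by positivity) (by positivity)
    set V : ℕ → Set ℝ := fun n => Metric.thickening (ε n) (t n) with hVdef
    have hVopen : ∀ n, IsOpen (V n) := fun n => Metric.isOpen_thickening
    have hcovV : E ⊆ ⋃ n, V n :=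
      hcov.trans (Set.iUnion_mono fun n => Metric.self_subset_thickening (hεpos n) _)
    obtain ⟨F, hF⟩ := hEcomp.elim_finite_subcover V hVopen hcovV
    -- Step 2: diameters of the thickened sets
    have hVdiam : ∀ n, EMetric.diam (V n) ≤ EMetric.diam (t n) + ENNReal.ofReal (2 * ε n) := by
      intro n
      have h := Metric.ediam_thickening_le (ε := (ε n).toNNReal) (s := t n)
      rw [Real.coe_toNNReal _ (hεpos n).le] at h
      refine h.trans ?_
      gcongr
      · exact le_rfl
      rw [ENNReal.ofReal_mul (by norm_num : (0:ℝ) ≤ 2)]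
      simp [ENNReal.ofReal_ofNat]
      rfl
    have hVle : ∀ n, EMetric.diam (V n) ≤ ENNReal.ofReal (3/4 * γ₁) := by
      intro n
      refine (hVdiam n).trans ?_
      have h1 : EMetric.diam (t n) ≤ ENNReal.ofReal (γ₁ / 2) := hdiam n
      have h2 : ENNReal.ofReal (2 * ε n) ≤ ENNReal.ofReal (2 * (γ₁/8)) := by
        apply ENNReal.ofReal_le_ofReal
        have := min_le_left (γ₁ / 8) (((1/32 : ℝ) * (1/2)^n) ^ (1/s) / 2)
        rw [hεdef]; dsimp only; linarith
      calc EMetric.diam (t n) + ENNReal.ofReal (2 * ε n)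
          ≤ ENNReal.ofReal (γ₁/2) + ENNReal.ofReal (2 * (γ₁/8)) := add_le_add h1 h2
        _ = ENNReal.ofReal (3/4 * γ₁) := by
            rw [← ENNReal.ofReal_add (by positivity) (by positivity)]
            congr 1
            ring
    have hVfin : ∀ n, EMetric.diam (V n) ≠ ⊤ := fun n =>
      ((hVle n).trans_lt ENNReal.ofReal_lt_top).ne
    set D : ℕ → ℝ := fun n => (EMetric.diam (V n)).toReal with hDdef
    have hD0 : ∀ n, 0 ≤ D n := fun n => ENNReal.toReal_nonneg
    have hDle : ∀ n, D n ≤ 3/4 * γ₁ := by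
      intro n
      rw [hDdef]
      exact ENNReal.toReal_le_of_le_ofReal (by positivity) (hVle n)
    have hDlt : ∀ n, D n < γ₁ := fun n => lt_of_le_of_lt (hDle n) (by linarith)
    have hDist : ∀ n, ∀ x ∈ V n, ∀ y ∈ V n, |x - y| ≤ D n := by
      intro n x hx y hy
      rw [← Real.dist_eq]
      exact Metric.dist_le_diam_of_mem' (hVfin n) hx hy
    -- Step 3: levels
    set bigF := F.filter (fun n => ∃ k, γ (k+1) ≤ D n) with hbigFdef
    set lvl : ℕ → ℕ := fun n => if h : ∃ k, γ (k+1) ≤ D n then Nat.find h else 0 with hlvldef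
    have hlvl : ∀ n ∈ bigF, γ (lvl n + 1) ≤ D n ∧ D n < γ (lvl n) ∧ N₁ + 1 ≤ lvl n := by
      intro n hn
      have hex : ∃ k, γ (k+1) ≤ D n := (Finset.mem_filter.mp hn).2
      have hlv : lvl n = Nat.find hex := by rw [hlvldef]; simp [hex]
      have h1 : γ (lvl n + 1) ≤ D n := hlv ▸ Nat.find_spec hex
      have h3 : N₁ + 1 ≤ lvl n := by
        by_contra hcon
        push_neg at hcon
        have : γ (N₁ + 1) ≤ γ (lvl n + 1) := hγanti (by omega)
        have := this.trans h1
        exact absurd this (not_le.mpr (hDlt n))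
      have h2 : D n < γ (lvl n) := by
        have hpos : 0 < lvl n := by omega
        have hfm := Nat.find_min hex (m := lvl n - 1) (by omega)
        push_neg at hfm
        rw [show lvl n - 1 + 1 = lvl n from by omega] at hfm
        exact hfm
      exact ⟨h1, h2, h3⟩
    -- Step 4: choose deep level M
    set M : ℕ := (F.sup lvl) + 4 * F.card + N₁ + 2 with hMdef
    have hM1 : 1 ≤ M := by omega
    have hMbig : ∀ n ∈ bigF, lvl n + 1 ≤ M := by
      intro n hn
      have := Finset.le_sup (f := lvl) (Finset.mem_filter.mp hn).1
      omega
    have hMcard : 4 * F.card ≤ ∏ i ∈ Finset.Ioc 0 M, m i := by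
      calc 4 * F.card ≤ M := by omega
        _ ≤ 2 ^ M := (Nat.lt_two_pow_self (n := M)).le
        _ = ∏ i ∈ Finset.Ioc 0 M, 2 := by
            rw [Finset.prod_const, Nat.card_Ioc, Nat.sub_zero]
        _ ≤ ∏ i ∈ Finset.Ioc 0 M, m i := Finset.prod_le_prod' fun i _ => hm i
    have hSMcard : (S M).card = ∏ i ∈ Finset.Ioc 0 M, m i := by
      rw [← Finset.filter_true_of_mem (hsub0 M)]
      exact aux_descend m γ S hγpos hSIcc hSnest hSgap hScard M 0 (Nat.zero_le M) I₀ hI0S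
    -- Step 5: counting
    set c : ℕ → ℕ := fun n => ((S M).filter (fun K => (K ∩ V n).Nonempty)).card with hcdef
    have hcover_card : (S M).card ≤ ∑ n ∈ F, c n := by
      have hsub : S M ⊆ F.biUnion (fun n => (S M).filter (fun K => (K ∩ V n).Nonempty)) := by
        intro K hK
        obtain ⟨x, hxK, hxE⟩ := hKE M K hK
        obtain ⟨n, hn, hxV⟩ := Set.mem_iUnion₂.mp (hF hxE)
        exact Finset.mem_biUnion.mpr ⟨n, hn, Finset.mem_filter.mpr ⟨hK, ⟨x, hxK, hxV⟩⟩⟩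
      exact (Finset.card_le_card hsub).trans Finset.card_biUnion_le
    have htiny : ∀ n ∈ F, n ∉ bigF → c n ≤ 1 := by
      intro n hnF hnb
      have hnt : ∀ k, ¬ γ (k+1) ≤ D n := by
        intro k hk
        exact hnb (Finset.mem_filter.mpr ⟨hnF, ⟨k, hk⟩⟩)
      apply Finset.card_le_one.mpr
      intro K hK K' hK'
      obtain ⟨hKS, x, hxK, hxV⟩ := Finset.mem_filter.mp hK
      obtain ⟨hKS', y, hyK, hyV⟩ := Finset.mem_filter.mp hK'
      by_contra hne
      have hgapM := hSgap M K hKS K' hKS' hne x hxK y hyK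
      have hMD : γ M ≤ D n := hgapM.trans (hDist n x hxV y hyV)
      have hh := hnt (M - 1)
      rw [show M - 1 + 1 = M from by omega] at hh
      exact hh hMD
    have hbigb : ∀ n ∈ bigF,
        (c n : ℝ) ≤ (min (4 * D n / γ (lvl n + 1)) (m (lvl n + 1) : ℝ)) *
          ∏ i ∈ Finset.Ioc (lvl n + 1) M, (m i : ℝ) := by
      intro n hn
      obtain ⟨hl1, hl2, hl3⟩ := hlvl n hn
      set k := lvl n with hk
      set A := (S (k+1)).filter (fun I => (I ∩ V n).Nonempty) with hA
      have hk1M : k + 1 ≤ M := hMbig n hn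
      -- c n ≤ A.card * ∏
      have step1 : c n ≤ A.card * ∏ i ∈ Finset.Ioc (k+1) M, m i := by
        have hsub : (S M).filter (fun K => (K ∩ V n).Nonempty) ⊆
            A.biUnion (fun I => (S M).filter (fun K => K ⊆ I)) := by
          intro K hK
          obtain ⟨hKS, x, hxK, hxV⟩ := Finset.mem_filter.mp hK
          obtain ⟨I, hI, hKI⟩ := aux_ancestor S hSnest M K hKS (k+1) hk1M
          refine Finset.mem_biUnion.mpr ⟨I, Finset.mem_filter.mpr ⟨hI, ⟨x, hKI hxK, hxV⟩⟩,
            Finset.mem_filter.mpr ⟨hKS, hKI⟩⟩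
        calc c n ≤ (A.biUnion (fun I => (S M).filter (fun K => K ⊆ I))).card :=
              Finset.card_le_card hsub
          _ ≤ ∑ I ∈ A, ((S M).filter (fun K => K ⊆ I)).card := Finset.card_biUnion_le
          _ = ∑ I ∈ A, ∏ i ∈ Finset.Ioc (k+1) M, m i := by
              apply Finset.sum_congr rfl
              intro I hI
              exact aux_descend m γ S hγpos hSIcc hSnest hSgap hScard M (k+1) hk1M I
                (Finset.mem_filter.mp hI).1
          _ = A.card * ∏ i ∈ Finset.Ioc (k+1) M, m i := by
              rw [Finset.sum_const, smul_eq_mul]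
      -- A.card ≤ m (k+1)
      have step2 : A.card ≤ m (k+1) := by
        rcases A.eq_empty_or_nonempty with h | ⟨I₁, hI₁⟩
        · simp [h]
        · obtain ⟨hI₁S, x₁, hx₁I, hx₁V⟩ := Finset.mem_filter.mp hI₁
          obtain ⟨P, hP, hI₁P⟩ := hSnest k I₁ hI₁S
          have hAsub : A ⊆ (S (k+1)).filter (fun J => J ⊆ P) := by
            intro I hIA
            obtain ⟨hIS, x, hxI, hxV⟩ := Finset.mem_filter.mp hIA
            obtain ⟨Q, hQ, hIQ⟩ := hSnest k I hIS
            have hQP : Q = P := by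
              by_contra hne
              have := hSgap k Q hQ P hP hne x (hIQ hxI) x₁ (hI₁P hx₁I)
              have hle := this.trans (hDist n x hxV x₁ hx₁V)
              exact absurd hle (not_le.mpr hl2)
            exact Finset.mem_filter.mpr ⟨hIS, hQP ▸ hIQ⟩
          calc A.card ≤ ((S (k+1)).filter (fun J => J ⊆ P)).card := Finset.card_le_card hAsub
            _ = m (k+1) := hScard k P hP
      -- A.card ≤ 4 D / γ
      have step3 : (A.card : ℝ) ≤ 4 * D n / γ (k+1) := by
        rcases A.eq_empty_or_nonempty with h | ⟨I₁, hI₁⟩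
        · rw [h]
          simp only [Finset.card_empty, Nat.cast_zero]
          have := hD0 n
          have := hγpos (k+1)
          positivity
        · obtain ⟨hI₁S, x₁, hx₁I, hx₁V⟩ := Finset.mem_filter.mp hI₁
          set pt : Set ℝ → ℝ := fun I => if h : (I ∩ V n).Nonempty then h.choose else 0 with hptdef
          have hptmem : ∀ I ∈ A, pt I ∈ I ∩ V n := by
            intro I hIA
            have h := (Finset.mem_filter.mp hIA).2
            simp only [hptdef, dif_pos h]
            exact h.choose_spec
          have hinj : Set.InjOn pt A := by
            intro I hI J hJ hIJ
            by_contra hne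
            have h1 := hptmem I hI
            have h2 := hptmem J hJ
            have := hSgap (k+1) I (Finset.mem_filter.mp hI).1 J (Finset.mem_filter.mp hJ).1
              hne (pt I) h1.1 (pt J) h2.1
            rw [hIJ] at this
            simp at this
            exact absurd (this.trans_lt (hγpos _)) (lt_irrefl _)
          have hcardim : (A.image pt).card = A.card := Finset.card_image_of_injOn hinj
          have hpack : ((A.image pt).card : ℝ) ≤ 2 * D n / γ (k+1) + 2 := by
            apply aux_packing _ _ _ x₁ (hγpos (k+1)) (hD0 n)
            · intro x hx
              obtain ⟨I, hIA, rfl⟩ := Finset.mem_image.mp hx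
              exact hDist n _ (hptmem I hIA).2 _ hx₁V
            · intro x hx y hy hxy
              obtain ⟨I, hIA, rfl⟩ := Finset.mem_image.mp hx
              obtain ⟨J, hJA, rfl⟩ := Finset.mem_image.mp hy
              have hne : I ≠ J := fun h => hxy (by rw [h])
              exact hSgap (k+1) I (Finset.mem_filter.mp hIA).1 J (Finset.mem_filter.mp hJA).1
                hne _ (hptmem I hIA).1 _ (hptmem J hJA).1
          have h2le : 1 ≤ D n / γ (k+1) := (one_le_div (hγpos (k+1))).mpr hl1
          have : (A.card : ℝ) ≤ 2 * D n / γ (k+1) + 2 := by rw [← hcardim]; exact hpack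
          have he1 : 2 * D n / γ (k+1) + 2 ≤ 4 * D n / γ (k+1) := by
            rw [mul_div_assoc, mul_div_assoc]
            nlinarith [h2le]
          linarith
      -- combine
      have hmin : (A.card : ℝ) ≤ min (4 * D n / γ (k+1)) (m (k+1) : ℝ) :=
        le_min step3 (by exact_mod_cast step2)
      calc (c n : ℝ) ≤ (A.card : ℝ) * ∏ i ∈ Finset.Ioc (k+1) M, (m i : ℝ) := by
            have := step1
            push_cast
            exact_mod_cast (by exact_mod_cast this : (c n:ℝ) ≤ ((A.card * ∏ i ∈ Finset.Ioc (k+1) M, m i : ℕ) : ℝ))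
        _ ≤ _ := by
            apply mul_le_mul_of_nonneg_right hmin
            positivity
    -- Step 6: the real inequality
    set PM : ℝ := ∏ i ∈ Finset.Ioc 0 M, (m i : ℝ) with hPMdef
    have hPMpos : 0 < PM := by
      rw [hPMdef]; apply Finset.prod_pos; intro i _; have := hm i; positivity
    have hPMeq : ((S M).card : ℝ) = PM := by
      rw [hSMcard, hPMdef]; push_cast; ring
    have h1le : (1:ℝ) ≤ ∑ n ∈ F, (c n : ℝ) / PM := by
      rw [← Finset.sum_div, le_div_iff₀ hPMpos, one_mul, ← hPMeq]
      exact_mod_cast hcover_card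
    have hterm : ∀ n ∈ bigF, (c n : ℝ) / PM ≤ 4 * D n ^ s := by
      intro n hn
      obtain ⟨hl1, hl2, hl3⟩ := hlvl n hn
      set k := lvl n with hkdef
      set γ' : ℝ := γ (k+1) with hγ'def
      have hγ'pos : 0 < γ' := hγpos _
      set b : ℝ := (m (k+1) : ℝ) with hbdef
      have hbpos : (0:ℝ) < b := by have := hm (k+1); rw [hbdef]; positivity
      set Pk : ℝ := ∏ i ∈ Finset.Ioc 0 k, (m i : ℝ) with hPkdef
      have hPkpos : 0 < Pk := Finset.prod_pos (fun i _ => by have := hm i; positivity)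
      set Q : ℝ := ∏ i ∈ Finset.Ioc (k+1) M, (m i : ℝ) with hQdef
      have hQpos : 0 < Q := Finset.prod_pos (fun i _ => by have := hm i; positivity)
      have hsplit : PM = (Pk * b) * Q := by
        rw [hPMdef, hPkdef, hbdef, hQdef, ← Finset.prod_Ioc_consecutive _ (Nat.zero_le (k+1)) (hMbig n hn),
          ← Finset.prod_Ioc_succ_top (Nat.zero_le k)]
      have hDpos : 0 < D n := lt_of_lt_of_le (hγpos (k+1)) hl1
      set a : ℝ := 4 * D n / γ' with hadef
      have hapos : 0 < a := by rw [hadef]; positivity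
      have hkey' : 1 ≤ Pk * (b * γ') ^ s := hkey k (by omega)
      have e0 : (c n : ℝ) / PM ≤ min a b / (Pk * b) := by
        calc (c n : ℝ) / PM ≤ (min a b * Q) / PM := by
              gcongr
              exact hbigb n hn
          _ = (Q * min a b) / (Q * (Pk * b)) := by rw [hsplit]; ring_nf
          _ = min a b / (Pk * b) := mul_div_mul_left _ _ (ne_of_gt hQpos)
      have hminpos : 0 < min a b := lt_min hapos hbpos
      have e1 : min a b ≤ a ^ s * b ^ (1 - s) := by
        calc min a b = (min a b) ^ s * (min a b) ^ (1-s) := by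
              rw [← Real.rpow_add hminpos]; norm_num
          _ ≤ a ^ s * b ^ (1 - s) :=
              mul_le_mul (Real.rpow_le_rpow hminpos.le (min_le_left _ _) hs0.le)
                (Real.rpow_le_rpow hminpos.le (min_le_right _ _) (by linarith))
                (by positivity) (by positivity)
      have e2 : a ^ s * b ^ (1 - s) / (Pk * b) = 4 ^ s * D n ^ s / (Pk * (b * γ') ^ s) := by
        rw [hadef, Real.div_rpow (by positivity) hγ'pos.le,
          Real.mul_rpow (by norm_num) hDpos.le, Real.rpow_sub hbpos, Real.rpow_one,
          Real.mul_rpow hbpos.le hγ'pos.le]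
        have hbs : (0:ℝ) < b ^ s := Real.rpow_pos_of_pos hbpos s
        have hγs : (0:ℝ) < γ' ^ s := Real.rpow_pos_of_pos hγ'pos s
        field_simp
      have e3 : 4 ^ s * D n ^ s / (Pk * (b * γ') ^ s) ≤ 4 ^ s * D n ^ s := by
        apply div_le_self (by positivity) hkey'
      have e4 : (4:ℝ) ^ s ≤ 4 := by
        calc (4:ℝ) ^ s ≤ 4 ^ (1:ℝ) := Real.rpow_le_rpow_of_exponent_le (by norm_num) hs1
          _ = 4 := Real.rpow_one 4
      calc (c n : ℝ)/PM ≤ min a b / (Pk * b) := e0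
        _ ≤ a ^ s * b ^ (1-s) / (Pk * b) := (div_le_div_iff_of_pos_right (by positivity)).mpr e1
        _ = 4 ^ s * D n ^ s / (Pk * (b*γ')^s) := e2
        _ ≤ 4 ^ s * D n ^ s := e3
        _ ≤ 4 * D n ^ s :=
            mul_le_mul_of_nonneg_right e4 (Real.rpow_nonneg (hD0 n) s)
    have hsumsplit : ∑ n ∈ F, (c n:ℝ)/PM = ∑ n ∈ bigF, (c n:ℝ)/PM +
        ∑ n ∈ F.filter (fun n => ¬ ∃ k, γ (k+1) ≤ D n), (c n:ℝ)/PM :=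
      (Finset.sum_filter_add_sum_filter_not F _ _).symm
    have htinysum : ∑ n ∈ F.filter (fun n => ¬ ∃ k, γ (k+1) ≤ D n), (c n:ℝ)/PM ≤ 1/4 := by
      have hcard4 : (F.card : ℝ) ≤ PM / 4 := by
        rw [le_div_iff₀ (by norm_num : (0:ℝ) < 4), hPMdef]
        calc (F.card : ℝ) * 4 = ((4 * F.card : ℕ) : ℝ) := by push_cast; ring
          _ ≤ ((∏ i ∈ Finset.Ioc 0 M, m i : ℕ) : ℝ) := by exact_mod_cast hMcard
          _ = ∏ i ∈ Finset.Ioc 0 M, (m i : ℝ) := by push_cast; ring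
      have h1 : ∀ n ∈ F.filter (fun n' => ¬ ∃ k, γ (k+1) ≤ D n'), (c n:ℝ)/PM ≤ 1/PM := by
        intro n hn
        obtain ⟨hnF, hnb⟩ := Finset.mem_filter.mp hn
        have hc1 : c n ≤ 1 := htiny n hnF (fun hmem => hnb (Finset.mem_filter.mp hmem).2)
        gcongr
        exact_mod_cast hc1
      calc ∑ n ∈ F.filter (fun n => ¬ ∃ k, γ (k+1) ≤ D n), (c n:ℝ)/PM
          ≤ ∑ _n ∈ F.filter (fun n => ¬ ∃ k, γ (k+1) ≤ D n), 1/PM := Finset.sum_le_sum h1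
        _ = ((F.filter (fun n => ¬ ∃ k, γ (k+1) ≤ D n)).card : ℝ) * (1/PM) := by
            rw [Finset.sum_const, nsmul_eq_mul]
        _ ≤ (F.card : ℝ) * (1/PM) := by
            have : ((F.filter (fun n => ¬ ∃ k, γ (k+1) ≤ D n)).card : ℝ) ≤ (F.card : ℝ) := by
              exact_mod_cast Finset.card_le_card (Finset.filter_subset _ _)
            have hPMinv : (0:ℝ) ≤ 1/PM := by positivity
            exact mul_le_mul_of_nonneg_right this hPMinv
        _ = (F.card : ℝ) / PM := by ring
        _ ≤ (PM/4)/PM := by gcongr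
        _ = 1/4 := by
            field_simp
    have hbigsum : (3/16:ℝ) ≤ ∑ n ∈ bigF, D n ^ s := by
      have h2 : ∑ n ∈ bigF, (c n:ℝ)/PM ≤ ∑ n ∈ bigF, 4 * D n ^ s := Finset.sum_le_sum hterm
      have h3 : ∑ n ∈ bigF, (4:ℝ) * D n ^ s = 4 * ∑ n ∈ bigF, D n ^ s := by
        rw [Finset.mul_sum]
      have h4 := h1le
      rw [hsumsplit] at h4
      linarith
    -- Step 7: back to `t`
    have htne : ∀ n ∈ bigF, (t n).Nonempty := by
      intro n hn
      obtain ⟨hl1, _, _⟩ := hlvl n hn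
      by_contra h
      rw [Set.not_nonempty_iff_eq_empty] at h
      have hVempty : V n = ∅ := by rw [hVdef]; simp [h]
      have hDn : D n = 0 := by rw [hDdef]; simp [hVempty, EMetric.diam]
      have := hγpos (lvl n + 1)
      rw [hDn] at hl1
      linarith
    have hofD : ∀ n, ENNReal.ofReal (D n ^ s) = EMetric.diam (V n) ^ s := by
      intro n
      rw [← ENNReal.ofReal_rpow_of_nonneg (hD0 n) hs0.le, hDdef]
      simp only []
      rw [ENNReal.ofReal_toReal (hVfin n)]
    have hVts : ∀ n, EMetric.diam (V n) ^ s ≤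
        EMetric.diam (t n) ^ s + ENNReal.ofReal ((1/32) * (1/2)^n) := by
      intro n
      have h1 : EMetric.diam (V n) ^ s ≤ (EMetric.diam (t n) + ENNReal.ofReal (2 * ε n)) ^ s :=
        ENNReal.rpow_le_rpow (hVdiam n) hs0.le
      have h2 := ENNReal.rpow_add_le_add_rpow (EMetric.diam (t n)) (ENNReal.ofReal (2 * ε n))
        hs0.le hs1
      have h3 : ENNReal.ofReal (2 * ε n) ^ s ≤ ENNReal.ofReal ((1/32) * (1/2)^n) := by
        rw [ENNReal.ofReal_rpow_of_nonneg (by have := hεpos n; positivity) hs0.le]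
        apply ENNReal.ofReal_le_ofReal
        have hle : 2 * ε n ≤ ((1/32 : ℝ) * (1/2)^n) ^ (1/s) := by
          have hmr : ε n ≤ ((1/32 : ℝ) * (1/2)^n) ^ (1/s) / 2 := min_le_right _ _
          linarith
        calc (2 * ε n) ^ s ≤ (((1/32 : ℝ) * (1/2)^n) ^ (1/s)) ^ s :=
              Real.rpow_le_rpow (by have := hεpos n; positivity) hle hs0.le
          _ = ((1/32 : ℝ) * (1/2)^n) ^ ((1/s) * s) := by
              rw [← Real.rpow_mul (by positivity)]
          _ = (1/32 : ℝ) * (1/2)^n := by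
              rw [one_div s, inv_mul_cancel₀ hs0.ne', Real.rpow_one]
      calc EMetric.diam (V n) ^ s ≤ _ := h1
        _ ≤ _ := h2
        _ ≤ EMetric.diam (t n) ^ s + ENNReal.ofReal ((1/32)*(1/2)^n) := add_le_add_right h3 _
    have hgeo : ∑ n ∈ bigF, ((1/32 : ℝ) * (1/2)^n) ≤ 1/16 := by
      set B := bigF.sup id + 1 with hB
      have hsub : bigF ⊆ Finset.range B := by
        intro n hn
        rw [Finset.mem_range, hB]
        have : n ≤ bigF.sup id := Finset.le_sup (f := id) hn
        omega
      calc ∑ n ∈ bigF, ((1/32:ℝ) * (1/2)^n)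
          ≤ ∑ n ∈ Finset.range B, ((1/32:ℝ)*(1/2)^n) :=
            Finset.sum_le_sum_of_subset_of_nonneg hsub (fun i _ _ => by positivity)
        _ = (1/32) * ∑ n ∈ Finset.range B, ((1/2:ℝ))^n := by rw [Finset.mul_sum]
        _ ≤ (1/32) * 2 := by
            gcongr
            exact sum_geometric_two_le B
        _ = 1/16 := by norm_num
    have hchain : ENNReal.ofReal (3/16) ≤
        (∑' n, ⨆ _ : (t n).Nonempty, EMetric.diam (t n) ^ s) + ENNReal.ofReal (1/16) := by
      calc ENNReal.ofReal (3/16) ≤ ENNReal.ofReal (∑ n ∈ bigF, D n ^ s) :=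
            ENNReal.ofReal_le_ofReal hbigsum
        _ = ∑ n ∈ bigF, ENNReal.ofReal (D n ^ s) :=
            ENNReal.ofReal_sum_of_nonneg (fun n _ => Real.rpow_nonneg (hD0 n) s)
        _ = ∑ n ∈ bigF, EMetric.diam (V n) ^ s := Finset.sum_congr rfl (fun n _ => hofD n)
        _ ≤ ∑ n ∈ bigF, (EMetric.diam (t n) ^ s + ENNReal.ofReal ((1/32)*(1/2)^n)) :=
            Finset.sum_le_sum (fun n _ => hVts n)
        _ = (∑ n ∈ bigF, EMetric.diam (t n) ^ s) + ∑ n ∈ bigF, ENNReal.ofReal ((1/32)*(1/2)^n) :=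
            Finset.sum_add_distrib
        _ ≤ (∑' n, ⨆ _ : (t n).Nonempty, EMetric.diam (t n) ^ s) + ENNReal.ofReal (1/16) := by
            apply add_le_add
            · calc ∑ n ∈ bigF, EMetric.diam (t n) ^ s
                  = ∑ n ∈ bigF, ⨆ _ : (t n).Nonempty, EMetric.diam (t n) ^ s := by
                    apply Finset.sum_congr rfl
                    intro n hn
                    rw [iSup_pos (htne n hn)]
                _ ≤ ∑' n, ⨆ _ : (t n).Nonempty, EMetric.diam (t n) ^ s := ENNReal.sum_le_tsum bigF
            · calc ∑ n ∈ bigF, ENNReal.ofReal ((1/32)*(1/2)^n)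
                  = ENNReal.ofReal (∑ n ∈ bigF, (1/32)*(1/2)^n) :=
                    (ENNReal.ofReal_sum_of_nonneg (fun n _ => by positivity)).symm
                _ ≤ ENNReal.ofReal (1/16) := ENNReal.ofReal_le_ofReal hgeo
    have h316 : ENNReal.ofReal (3/16 : ℝ) = ENNReal.ofReal (1/8 : ℝ) + ENNReal.ofReal (1/16 : ℝ) := by
      rw [← ENNReal.ofReal_add (by norm_num) (by norm_num)]
      norm_num
    rw [h316] at hchain
    exact (ENNReal.add_le_add_iff_right ENNReal.ofReal_ne_top).mp hchain
  -- conclusion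
  have h0s : (0:ℝ) ≤ s := hs0.le
  have hne0 : μH[(s.toNNReal : ℝ)] E ≠ 0 := by
    rw [Real.coe_toNNReal s h0s]
    intro h
    rw [h] at hmain
    simp at hmain
  have := le_dimH_of_hausdorffMeasure_ne_zero hne0
  rwa [show ((s.toNNReal : ℝ≥0∞)) = ENNReal.ofReal s from rfl] at this

/-- Packing upper bound for the product. -/
lemma cantor_pack (m : ℕ → ℕ) (γ : ℕ → ℝ) (S : ℕ → Finset (Set ℝ)) (I₀ : Set ℝ) (a₀ b₀ : ℝ)
    (hγpos : ∀ n, 0 < γ n)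
    (hS0 : S 0 = {I₀}) (hI₀ : I₀ = Set.Icc a₀ b₀) (hab : a₀ ≤ b₀)
    (hSIcc : ∀ n, ∀ I ∈ S n, ∃ a b : ℝ, a ≤ b ∧ I = Set.Icc a b)
    (hSnest : ∀ n, ∀ J ∈ S (n+1), ∃ I ∈ S n, J ⊆ I)
    (hSgap : ∀ n, ∀ I ∈ S n, ∀ J ∈ S n, I ≠ J → ∀ x ∈ I, ∀ y ∈ J, γ n ≤ |x - y|)
    (hScard : ∀ n, ∀ I ∈ S n, ((S (n+1)).filter (fun J => J ⊆ I)).card = m (n+1)) :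
    ∀ n, (∏ i ∈ Finset.Ioc 0 n, (m i : ℝ)) ≤ 2 * (b₀ - a₀) / γ n + 2 := by
  intro n
  have hI0S : I₀ ∈ S 0 := by rw [hS0]; exact Finset.mem_singleton_self I₀
  have hsub0 : ∀ K ∈ S n, K ⊆ I₀ := by
    intro K hK
    obtain ⟨I, hI, hKI⟩ := aux_ancestor S hSnest n K hK 0 (Nat.zero_le n)
    rw [hS0, Finset.mem_singleton] at hI
    exact hI ▸ hKI
  have hall : (S n).filter (fun K => K ⊆ I₀) = S n := Finset.filter_true_of_mem hsub0
  have hcard : (S n).card = ∏ i ∈ Finset.Ioc 0 n, m i := by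
    rw [← hall]
    exact aux_descend m γ S hγpos hSIcc hSnest hSgap hScard n 0 (Nat.zero_le n) I₀ hI0S
  have hNE : ∀ I ∈ S n, I.Nonempty := by
    intro I hI
    obtain ⟨a, b, hab', rfl⟩ := hSIcc n I hI
    exact Set.nonempty_Icc.mpr hab'
  classical
  set pt : Set ℝ → ℝ := fun I => if h : I.Nonempty then h.choose else 0 with hpt
  have hptmem : ∀ I ∈ S n, pt I ∈ I := by
    intro I hI
    have h := hNE I hI
    simp only [hpt, dif_pos h]
    exact h.choose_spec
  set P : Finset ℝ := (S n).image pt with hP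
  have hinj : Set.InjOn pt (S n) := by
    intro I hI J hJ hIJ
    by_contra hne
    have h1 : pt I ∈ I := hptmem I hI
    have h2 : pt J ∈ J := hptmem J hJ
    have := hSgap n I hI J hJ hne (pt I) h1 (pt J) h2
    rw [hIJ] at this
    simp at this
    exact absurd (this.trans_lt (hγpos n)) (lt_irrefl _)
  have hcardP : P.card = (S n).card := Finset.card_image_of_injOn hinj
  have hpack : (P.card : ℝ) ≤ 2 * (b₀ - a₀) / γ n + 2 := by
    apply aux_packing P (γ n) (b₀ - a₀) a₀ (hγpos n) (by linarith)
    · intro x hx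
      obtain ⟨I, hI, rfl⟩ := Finset.mem_image.mp hx
      have : pt I ∈ I₀ := hsub0 I hI (hptmem I hI)
      rw [hI₀] at this
      rw [abs_le]
      constructor <;> [linarith [this.1]; linarith [this.2]]
    · intro x hx y hy hxy
      obtain ⟨I, hI, rfl⟩ := Finset.mem_image.mp hx
      obtain ⟨J, hJ, rfl⟩ := Finset.mem_image.mp hy
      have hne : I ≠ J := fun h => hxy (by rw [h])
      exact hSgap n I hI J hJ hne _ (hptmem I hI) _ (hptmem J hJ)
  calc (∏ i ∈ Finset.Ioc 0 n, (m i : ℝ)) = ((S n).card : ℝ) := by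
        rw [hcard]; push_cast; ring
    _ = (P.card : ℝ) := by rw [hcardP]
    _ ≤ 2 * (b₀ - a₀) / γ n + 2 := hpack

end Main

/-- Falconer's Example 4.6: lower bound for the Hausdorff dimension of a Cantor-type set.
`C n` is the (finite) collection of closed intervals making up the `n`-th stage `E n = ⋃₀ C n`. -/
theorem stmt12 (C : ℕ → Set (Set ℝ)) (m : ℕ → ℕ) (γ : ℕ → ℝ)
    (hfin : ∀ n, (C n).Finite)
    (hne : ∀ n, (C n).Nonempty)
    (hIcc : ∀ n, ∀ I ∈ C n, ∃ a b : ℝ, a ≤ b ∧ I = Set.Icc a b)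
    (hnested : ∀ n, ∀ J ∈ C (n + 1), ∃ I ∈ C n, J ⊆ I)
    (hm : ∀ n, 2 ≤ m n)
    (hcount : ∀ n, ∀ I ∈ C n, m (n + 1) ≤ {J ∈ C (n + 1) | J ⊆ I}.ncard)
    (hγpos : ∀ n, 0 < γ n)
    (hγmono : ∀ n, γ (n + 1) < γ n)
    (hgap : ∀ n, ∀ I ∈ C n, ∀ J ∈ C n, I ≠ J → ∀ x ∈ I, ∀ y ∈ J, γ n ≤ |x - y|) :
    ENNReal.ofReal
        (liminf (fun n =>
            Real.log (∏ i ∈ Finset.Icc 1 n, (m i : ℝ)) /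
              (-Real.log ((m (n + 1) : ℝ) * γ (n + 1)))) atTop) ≤
      dimH (⋂ n, ⋃₀ C n) := by
  classical
  -- abbreviations
  set f : ℕ → ℝ := fun n =>
    Real.log (∏ i ∈ Finset.Icc 1 n, (m i : ℝ)) /
      (-Real.log ((m (n + 1) : ℝ) * γ (n + 1))) with hfdef
  set L : ℝ := liminf f atTop with hLdef
  rcases le_or_gt L 0 with hL | hL
  · rw [ENNReal.ofReal_of_nonpos hL]
    exact zero_le
  -- uniqueness at C-level
  have hCuniq : ∀ n, ∀ I ∈ C n, ∀ J ∈ C n, (I ∩ J).Nonempty → I = J := by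
    intro n I hI J hJ ⟨x, hxI, hxJ⟩
    by_contra hne
    have h0 : γ n ≤ 0 := by simpa using hgap n I hI J hJ hne x hxI x hxJ
    exact absurd h0 (not_le.mpr (hγpos n))
  -- select the nested family
  obtain ⟨I₀, hI₀C⟩ := hne 0
  obtain ⟨a₀, b₀, hab, hI₀⟩ := hIcc 0 I₀ hI₀C
  have hFsel : ∀ n (I : Set ℝ), ∃ (u : Finset (Set ℝ)), I ∈ C n →
      (↑u ⊆ {J ∈ C (n+1) | J ⊆ I} ∧ u.card = m (n+1)) := by
    intro n I
    by_cases hI : I ∈ C n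
    · have hGfin : {J ∈ C (n+1) | J ⊆ I}.Finite :=
        (hfin (n+1)).subset (fun J hJ => hJ.1)
      have hGcard : m (n+1) ≤ hGfin.toFinset.card := by
        rw [← Set.ncard_eq_toFinset_card _ hGfin]
        exact hcount n I hI
      obtain ⟨u, hu, hucard⟩ := Finset.exists_subset_card_eq hGcard
      refine ⟨u, fun _ => ⟨?_, hucard⟩⟩
      intro J hJ
      exact hGfin.mem_toFinset.mp (hu hJ)
    · exact ⟨∅, fun h => absurd h hI⟩
  choose Fsel hFsel using hFsel
  set S : ℕ → Finset (Set ℝ) := fun n => Nat.rec {I₀} (fun n Sn => Sn.biUnion (Fsel n)) n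
    with hSdef
  have hS0 : S 0 = {I₀} := rfl
  have hSsucc : ∀ n, S (n+1) = (S n).biUnion (Fsel n) := fun n => rfl
  have hSC : ∀ n, ∀ I ∈ S n, I ∈ C n := by
    intro n
    induction n with
    | zero =>
      intro I hI
      rw [hS0, Finset.mem_singleton] at hI
      exact hI ▸ hI₀C
    | succ n ih =>
      intro J hJ
      rw [hSsucc, Finset.mem_biUnion] at hJ
      obtain ⟨I, hI, hJF⟩ := hJ
      exact ((hFsel n I (ih I hI)).1 hJF).1
  have hSIcc : ∀ n, ∀ I ∈ S n, ∃ a b : ℝ, a ≤ b ∧ I = Set.Icc a b :=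
    fun n I hI => hIcc n I (hSC n I hI)
  have hSnest : ∀ n, ∀ J ∈ S (n+1), ∃ I ∈ S n, J ⊆ I := by
    intro n J hJ
    rw [hSsucc, Finset.mem_biUnion] at hJ
    obtain ⟨I, hI, hJF⟩ := hJ
    exact ⟨I, hI, ((hFsel n I (hSC n I hI)).1 hJF).2⟩
  have hSgap : ∀ n, ∀ I ∈ S n, ∀ J ∈ S n, I ≠ J → ∀ x ∈ I, ∀ y ∈ J, γ n ≤ |x - y| :=
    fun n I hI J hJ hne' => hgap n I (hSC n I hI) J (hSC n J hJ) hne'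
  have hSNE : ∀ n, ∀ I ∈ S n, I.Nonempty := by
    intro n I hI
    obtain ⟨a, b, hab', rfl⟩ := hSIcc n I hI
    exact Set.nonempty_Icc.mpr hab'
  have hScard : ∀ n, ∀ I ∈ S n, ((S (n+1)).filter (fun J => J ⊆ I)).card = m (n+1) := by
    intro n I hI
    have heq : (S (n+1)).filter (fun J => J ⊆ I) = Fsel n I := by
      ext J
      constructor
      · intro hJ
        obtain ⟨hJS, hJI⟩ := Finset.mem_filter.mp hJ
        rw [hSsucc, Finset.mem_biUnion] at hJS
        obtain ⟨I', hI', hJF⟩ := hJS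
        obtain ⟨x, hx⟩ := hSNE (n+1) J (Finset.mem_filter.mp hJ |>.1)
        have hJI' : J ⊆ I' := ((hFsel n I' (hSC n I' hI')).1 hJF).2
        have : I' = I := hCuniq n I' (hSC n I' hI') I (hSC n I hI) ⟨x, hJI' hx, hJI hx⟩
        exact this ▸ hJF
      · intro hJ
        refine Finset.mem_filter.mpr ⟨?_, ((hFsel n I (hSC n I hI)).1 hJ).2⟩
        rw [hSsucc, Finset.mem_biUnion]
        exact ⟨I, hI, hJ⟩
    rw [heq]
    exact (hFsel n I (hSC n I hI)).2
  have hγantiA : Antitone γ := antitone_nat_of_succ_le (fun n => (hγmono n).le)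
  have hγanti : ∀ {j k : ℕ}, j ≤ k → γ k ≤ γ j := fun h => hγantiA h
  -- the subset relation
  have hsubset : (⋂ n, ⋃₀ ((S n : Finset (Set ℝ)) : Set (Set ℝ))) ⊆ ⋂ n, ⋃₀ C n := by
    apply Set.iInter_mono
    intro n
    apply Set.sUnion_subset_sUnion
    intro I hI
    exact hSC n I hI
  -- liminf is a supremum
  have hLsup : L = sSup {a | ∀ᶠ n in atTop, a ≤ f n} := Filter.liminf_eq
  have hexceed : ∀ s : ℝ, s < L → ∀ᶠ n in atTop, s < f n := by
    intro s hs
    have hne' : {a | ∀ᶠ n in atTop, a ≤ f n}.Nonempty := by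
      by_contra h
      rw [Set.not_nonempty_iff_eq_empty] at h
      rw [hLsup, h, Real.sSup_empty] at hL
      exact absurd hL (lt_irrefl 0)
    obtain ⟨a, ha, hsa⟩ := exists_lt_of_lt_csSup hne' (hLsup ▸ hs)
    exact ha.mono (fun n hn => hsa.trans_le hn)
  -- extraction of the key inequality
  have hkey_of : ∀ s : ℝ, 0 < s → s < L → ∃ N₀ : ℕ, ∀ k, N₀ ≤ k →
      (0 < -Real.log ((m (k+1) : ℝ) * γ (k+1))) ∧
      1 ≤ (∏ i ∈ Finset.Ioc 0 k, (m i : ℝ)) * ((m (k+1) : ℝ) * γ (k+1)) ^ s := by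
    intro s hs0 hsL
    obtain ⟨N₀, hN₀⟩ := eventually_atTop.mp ((hexceed s hsL).and (eventually_ge_atTop 1))
    refine ⟨N₀, fun k hk => ?_⟩
    obtain ⟨hsf, hk1⟩ := hN₀ k hk
    have hIccIoc : Finset.Icc 1 k = Finset.Ioc 0 k := Finset.Icc_add_one_left_eq_Ioc 0 k
    set P : ℝ := ∏ i ∈ Finset.Ioc 0 k, (m i : ℝ) with hPdef
    have hP2 : (2:ℝ) ≤ P := by
      have h1mem : 1 ∈ Finset.Ioc 0 k := by rw [Finset.mem_Ioc]; omega
      have hmono : m 1 ≤ ∏ i ∈ Finset.Ioc 0 k, m i :=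
        Finset.single_le_prod' (fun i _ => by have := hm i; omega) h1mem
      have h2 : 2 ≤ ∏ i ∈ Finset.Ioc 0 k, m i := le_trans (hm 1) hmono
      rw [hPdef]
      calc (2:ℝ) ≤ ((∏ i ∈ Finset.Ioc 0 k, m i : ℕ) : ℝ) := by exact_mod_cast h2
        _ = ∏ i ∈ Finset.Ioc 0 k, (m i : ℝ) := by push_cast; ring
    have hPpos : (0:ℝ) < P := by linarith
    have hNlog : 0 ≤ Real.log P := Real.log_nonneg (by linarith)
    set q : ℝ := (m (k+1) : ℝ) * γ (k+1) with hqdef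
    have hqpos : 0 < q := by
      have := hγpos (k+1)
      have h1 := hm (k+1)
      have h2 : (0:ℝ) < (m (k+1) : ℝ) := by exact_mod_cast (by omega : 0 < m (k+1))
      positivity
    set Dk : ℝ := -Real.log q with hDdef
    have hfk : f k = Real.log P / Dk := by
      rw [hfdef]
      dsimp only
      rw [hIccIoc]
    have hDpos : 0 < Dk := by
      by_contra hD
      push_neg at hD
      have : f k ≤ 0 := by
        rw [hfk]
        exact div_nonpos_iff.mpr (Or.inl ⟨hNlog, hD⟩)
      linarith [hsf]
    refine ⟨hDpos, ?_⟩
    have hsD : s * Dk < Real.log P := by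
      rw [hfk] at hsf
      exact (lt_div_iff₀ hDpos).mp hsf
    have hexp : (0:ℝ) ≤ Real.log P + s * Real.log q := by
      rw [hDdef] at hsD
      linarith
    calc (1:ℝ) = Real.exp 0 := Real.exp_zero.symm
      _ ≤ Real.exp (Real.log P + s * Real.log q) := Real.exp_le_exp.mpr hexp
      _ = P * q ^ s := by
        rw [Real.exp_add, Real.exp_log hPpos, Real.rpow_def_of_pos hqpos, mul_comm s (Real.log q)]
  -- packing bound
  have hpack := cantor_pack m γ S I₀ a₀ b₀ hγpos hS0 hI₀ hab hSIcc hSnest hSgap hScard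
  set cs : ℝ := 2 * (b₀ - a₀) + 2 * γ 0 with hcsdef
  have hcspos : 0 < cs := by
    have := hγpos 0
    rw [hcsdef]
    nlinarith
  have hPq : ∀ k, (∏ i ∈ Finset.Ioc 0 k, (m i : ℝ)) * ((m (k+1):ℝ) * γ (k+1)) ≤ cs := by
    intro k
    have h1 := hpack (k+1)
    have hγk : 0 < γ (k+1) := hγpos (k+1)
    have h2 : (∏ i ∈ Finset.Ioc 0 (k+1), (m i:ℝ)) * γ (k+1) ≤ 2*(b₀-a₀) + 2*γ (k+1) := by
      have h3 := mul_le_mul_of_nonneg_right h1 hγk.le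
      have h4 : (2*(b₀-a₀)/γ (k+1) + 2) * γ (k+1) = 2*(b₀-a₀) + 2*γ (k+1) := by
        field_simp
      rw [h4] at h3
      exact h3
    have h5 : (∏ i ∈ Finset.Ioc 0 (k+1), (m i:ℝ)) =
        (∏ i ∈ Finset.Ioc 0 k, (m i:ℝ)) * (m (k+1):ℝ) :=
      Finset.prod_Ioc_succ_top (Nat.zero_le k) _
    have h6 : γ (k+1) ≤ γ 0 := hγanti (Nat.zero_le _)
    rw [h5] at h2
    rw [hcsdef]
    calc (∏ i ∈ Finset.Ioc 0 k, (m i:ℝ)) * ((m (k+1):ℝ) * γ (k+1))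
        = (∏ i ∈ Finset.Ioc 0 k, (m i:ℝ)) * (m (k+1):ℝ) * γ (k+1) := by ring
      _ ≤ 2*(b₀-a₀) + 2*γ (k+1) := h2
      _ ≤ 2*(b₀-a₀) + 2*γ 0 := by linarith
  -- L ≤ 1
  have hB : L ≤ 1 := by
    by_contra hBc
    push_neg at hBc
    set σ : ℝ := (1 + L)/2 with hσdef
    have hσ1 : 1 < σ := by rw [hσdef]; linarith
    have hσL : σ < L := by rw [hσdef]; linarith
    have hσ0 : 0 < σ := by linarith
    obtain ⟨N₀, hN₀⟩ := hkey_of σ hσ0 hσL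
    set θ : ℝ := 1 - 1/σ with hθdef
    have hθpos : 0 < θ := by
      rw [hθdef]
      have h1 : 1/σ < 1 := by rw [div_lt_one hσ0]; exact hσ1
      linarith
    obtain ⟨k₀, hk₀⟩ := exists_nat_gt (max ((max cs 1) ^ (1/θ)) 0)
    set k := max k₀ N₀ with hkdef
    have hkN : N₀ ≤ k := le_max_right _ _
    obtain ⟨hD, hkey'⟩ := hN₀ k hkN
    set P : ℝ := ∏ i ∈ Finset.Ioc 0 k, (m i:ℝ) with hPdef
    set q : ℝ := (m (k+1):ℝ) * γ (k+1) with hqdef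
    have hqpos : 0 < q := by
      have h1 := hγpos (k+1)
      have h2 : (0:ℝ) < (m (k+1) : ℝ) := by exact_mod_cast (by have := hm (k+1); omega : 0 < m (k+1))
      rw [hqdef]; positivity
    have hPpos : 0 < P := Finset.prod_pos (fun i _ => by
      exact_mod_cast (by have := hm i; omega : 0 < m i))
    have hP2k : ((2:ℝ))^k ≤ P := by
      rw [hPdef]
      calc (2:ℝ)^k = ∏ _i ∈ Finset.Ioc 0 k, (2:ℝ) := by
            rw [Finset.prod_const, Nat.card_Ioc, Nat.sub_zero]
        _ ≤ ∏ i ∈ Finset.Ioc 0 k, (m i : ℝ) :=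
            Finset.prod_le_prod (fun i _ => by norm_num) (fun i _ => by exact_mod_cast hm i)
    have hkP : ((k:ℝ)) < P := by
      have h1 : (k:ℝ) < (2:ℝ)^k := by exact_mod_cast Nat.lt_two_pow_self (n := k)
      linarith
    have hcP : (max cs 1)^(1/θ) < P := by
      have h1 : (max cs 1)^(1/θ) ≤ max ((max cs 1) ^ (1/θ)) 0 := le_max_left _ _
      have h2 : (k₀:ℝ) ≤ (k:ℝ) := by exact_mod_cast le_max_left k₀ N₀
      linarith
    have hq_ge : (P ^ (1/σ))⁻¹ ≤ q := by
      have h2 : P⁻¹ ≤ q^σ := by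
        rw [inv_eq_one_div, div_le_iff₀ hPpos]
        calc (1:ℝ) ≤ P * q^σ := hkey'
          _ = q^σ * P := by ring
      have h3 := Real.rpow_le_rpow (by positivity) h2 (by positivity : (0:ℝ) ≤ 1/σ)
      have h4 : (q^σ) ^ (1/σ) = q := by
        rw [← Real.rpow_mul hqpos.le, mul_one_div, div_self hσ0.ne', Real.rpow_one]
      have h5 : (P⁻¹) ^ (1/σ) = (P ^ (1/σ))⁻¹ := Real.inv_rpow hPpos.le _
      rw [h4, h5] at h3
      exact h3
    have hPq' : P * q ≤ cs := hPq k
    have hfinal : P ^ θ ≤ cs := by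
      have h6 : P * (P ^ (1/σ))⁻¹ ≤ P * q := mul_le_mul_of_nonneg_left hq_ge hPpos.le
      have h7 : P * (P ^ (1/σ))⁻¹ = P ^ θ := by
        rw [hθdef, Real.rpow_sub hPpos, Real.rpow_one]
        ring
      linarith
    have h8 : max cs 1 < P ^ θ := by
      have h9 : ((max cs 1) ^ (1/θ)) ^ θ < P ^ θ :=
        Real.rpow_lt_rpow (by positivity) hcP hθpos
      rwa [← Real.rpow_mul (by positivity), one_div, inv_mul_cancel₀ hθpos.ne',
        Real.rpow_one] at h9
    have h10 := le_max_left cs 1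
    linarith
  -- main bound for each s' < L
  have hmain : ∀ s' : ℝ, 0 < s' → s' < L → ENNReal.ofReal s' ≤ dimH (⋂ n, ⋃₀ C n) := by
    intro s' h0 hsL
    obtain ⟨N₀, hN₀⟩ := hkey_of s' h0 hsL
    have hs'1 : s' ≤ 1 := le_of_lt (lt_of_lt_of_le hsL hB)
    have hlow := cantor_lower m γ S I₀ a₀ b₀ hm hγpos hγanti hS0 hI₀ hab hSIcc hSnest hSgap
      hScard s' h0 hs'1 N₀ (fun k hk => (hN₀ k hk).2)
    exact hlow.trans (dimH_mono hsubset)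
  -- conclude
  by_contra hcon
  push_neg at hcon
  have hfin' : dimH (⋂ n, ⋃₀ C n) ≠ ⊤ := (hcon.trans_le ENNReal.ofReal_lt_top.le).ne
  set d : ℝ := (dimH (⋂ n, ⋃₀ C n)).toReal with hddef
  have hdL : d < L := by
    have h1 := (ENNReal.toReal_lt_toReal hfin' ENNReal.ofReal_ne_top).mpr hcon
    rwa [ENNReal.toReal_ofReal hL.le] at h1
  obtain ⟨s', hs'1, hs'2⟩ := exists_between (max_lt hdL hL : max d 0 < L)
  have h0s' : 0 < s' := lt_of_le_of_lt (le_max_right d 0) hs'1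
  have h2 := hmain s' h0s' hs'2
  have h3 : s' ≤ d := by
    have h4 := ENNReal.toReal_mono hfin' h2
    rwa [ENNReal.toReal_ofReal h0s'.le] at h4
  have h5 : d < s' := lt_of_le_of_lt (le_max_left d 0) hs'1
  linarith
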